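/- arXiv:2206.06483 — 3 statements merged into one kernel-verified Lean document; each statement's English description precedes it below -/
import Mathlib

section
/- With the operators T^{q^a}_m as above, the commutator satisfies [T^{q^a}_m, T^{q^b}_n] = ((q^{a+b} − 1)(q^{−na} − q^{−mb})/((q^a − 1)(q^b − 1)))·T^{q^{a+b}}_{m+n} − ((q^{−na} − 1)/(q^b − 1))·T^{q^a}_{m+n} + ((q^{−mb} − 1)/(q^a − 1))·T^{q^b}_{m+n}, as operators on Laurent polynomials. -/
/-- The q^a-deformed number `[n]_{q^a} = (1 - q^{a n})/(1 - q^a)`. -/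
noncomputable def qaNum (q : ℝ) (a : ℕ) (n : ℤ) : ℝ :=
  (1 - q ^ ((a : ℤ) * n)) / (1 - q ^ (a : ℤ))

/-- The operator `T^{q^a}_m` on Laurent polynomials (realized as `ℤ →₀ ℝ`),
sending the monomial `z^k` to `-[m+k]_{q^a} z^{m+k}`. -/
noncomputable def Tq (q : ℝ) (a : ℕ) (m : ℤ) (f : ℤ →₀ ℝ) : ℤ →₀ ℝ :=
  f.sum fun k c => Finsupp.single (m + k) (-(qaNum q a (m + k)) * c)

lemma Tq_zero (q : ℝ) (a : ℕ) (m : ℤ) : Tq q a m 0 = 0 := by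
  simp [Tq]

lemma Tq_single (q : ℝ) (a : ℕ) (m k : ℤ) (c : ℝ) :
    Tq q a m (Finsupp.single k c) = Finsupp.single (m + k) (-(qaNum q a (m + k)) * c) := by
  classical
  rw [Tq, Finsupp.sum_single_index (by simp)]

lemma Tq_add (q : ℝ) (a : ℕ) (m : ℤ) (f g : ℤ →₀ ℝ) :
    Tq q a m (f + g) = Tq q a m f + Tq q a m g := by
  classical
  unfold Tq
  rw [Finsupp.sum_add_index' (by intro i; simp) (by intro i b₁ b₂; rw [mul_add, Finsupp.single_add])]

lemma pow_ne_one_of (q : ℝ) (hq : 0 < q) (hq1 : q ≠ 1) {c : ℕ} (hc : 0 < c) : q ^ c ≠ 1 := by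
  rcases hq1.lt_or_gt with h | h
  · exact ne_of_lt (pow_lt_one₀ hq.le h hc.ne')
  · exact ne_of_gt (one_lt_pow₀ h hc.ne')

lemma Tq_key (q : ℝ) (hq : 0 < q) (hq1 : q ≠ 1) (a b : ℕ) (ha : 0 < a) (hb : 0 < b)
    (m n k : ℤ) (c : ℝ) :
    -(qaNum q a (m + n + k)) * (-(qaNum q b (n + k)) * c) -
      -(qaNum q b (m + n + k)) * (-(qaNum q a (m + k)) * c) =
    ((q ^ (a + b) - 1) * (q ^ (-(n * (a : ℤ))) - q ^ (-(m * (b : ℤ)))) /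
        ((q ^ a - 1) * (q ^ b - 1))) * (-(qaNum q (a + b) (m + n + k)) * c) -
    ((q ^ (-(n * (a : ℤ))) - 1) / (q ^ b - 1)) * (-(qaNum q a (m + n + k)) * c) +
    ((q ^ (-(m * (b : ℤ))) - 1) / (q ^ a - 1)) * (-(qaNum q b (m + n + k)) * c) := by
  have hq0 : q ≠ 0 := ne_of_gt hq
  have hA1 : q ^ a ≠ 1 := pow_ne_one_of q hq hq1 ha
  have hB1 : q ^ b ≠ 1 := pow_ne_one_of q hq hq1 hb
  have hAB1 : q ^ (a + b) ≠ 1 := pow_ne_one_of q hq hq1 (by omega)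
  unfold qaNum
  have hcast : ((a + b : ℕ) : ℤ) = (a : ℤ) + (b : ℤ) := by push_cast; ring
  rw [hcast]
  have e1 : ((a : ℤ)) * (m + n + k) = (a : ℤ) * m + ((a : ℤ) * n + (a : ℤ) * k) := by ring
  have e2 : ((b : ℤ)) * (n + k) = (b : ℤ) * n + (b : ℤ) * k := by ring
  have e3 : ((b : ℤ)) * (m + n + k) = (b : ℤ) * m + ((b : ℤ) * n + (b : ℤ) * k) := by ring
  have e4 : ((a : ℤ)) * (m + k) = (a : ℤ) * m + (a : ℤ) * k := by ring
  have e5 : ((a : ℤ) + (b : ℤ)) * (m + n + k) =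
      (a : ℤ) * m + ((a : ℤ) * n + ((a : ℤ) * k + ((b : ℤ) * m + ((b : ℤ) * n + (b : ℤ) * k)))) := by
    ring
  have e6 : -(n * (a : ℤ)) = -((a : ℤ) * n) := by ring
  have e7 : -(m * (b : ℤ)) = -((b : ℤ) * m) := by ring
  rw [e1, e2, e3, e4, e5, e6, e7]
  have hpa : q ^ a = q ^ ((a : ℤ)) := (zpow_natCast q a).symm
  have hpb : q ^ b = q ^ ((b : ℤ)) := (zpow_natCast q b).symm
  have hpab : q ^ (a + b) = q ^ ((a : ℤ)) * q ^ ((b : ℤ)) := by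
    rw [pow_add, zpow_natCast, zpow_natCast]
  rw [hpa] at hA1
  rw [hpb] at hB1
  rw [hpab] at hAB1
  rw [hpa, hpb, hpab]
  simp only [zpow_add₀ hq0, zpow_neg]
  set α := q ^ ((a : ℤ) * m) with hα
  set β := q ^ ((a : ℤ) * n) with hβ
  set γ := q ^ ((a : ℤ) * k) with hγ
  set δ := q ^ ((b : ℤ) * m) with hδ
  set ε := q ^ ((b : ℤ) * n) with hε
  set ζ := q ^ ((b : ℤ) * k) with hζ
  set A := q ^ ((a : ℤ)) with hA
  set B := q ^ ((b : ℤ)) with hBv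
  have hβ0 : β ≠ 0 := zpow_ne_zero _ hq0
  have hδ0 : δ ≠ 0 := zpow_ne_zero _ hq0
  have h1A : (1 : ℝ) - A ≠ 0 := fun h => hA1 (by linarith)
  have h1B : (1 : ℝ) - B ≠ 0 := fun h => hB1 (by linarith)
  have h1AB : (1 : ℝ) - A * B ≠ 0 := fun h => hAB1 (by linarith)
  have hA1' : A - 1 ≠ 0 := sub_ne_zero.mpr hA1
  have hB1' : B - 1 ≠ 0 := sub_ne_zero.mpr hB1
  field_simp
  ring

theorem Tq_commutator (q : ℝ) (hq : 0 < q) (hq1 : q ≠ 1) (a b : ℕ) (ha : 0 < a) (hb : 0 < b)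
    (m n : ℤ) (f : ℤ →₀ ℝ) :
    Tq q a m (Tq q b n f) - Tq q b n (Tq q a m f) =
      ((q ^ (a + b) - 1) * (q ^ (-(n * (a : ℤ))) - q ^ (-(m * (b : ℤ)))) /
          ((q ^ a - 1) * (q ^ b - 1))) • Tq q (a + b) (m + n) f -
      ((q ^ (-(n * (a : ℤ))) - 1) / (q ^ b - 1)) • Tq q a (m + n) f +
      ((q ^ (-(m * (b : ℤ))) - 1) / (q ^ a - 1)) • Tq q b (m + n) f := by
  classical
  induction f using Finsupp.induction_linear with
  | zero => simp [Tq_zero]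
  | add f g hf hg =>
    ext j
    have hf' := DFunLike.congr_fun hf j
    have hg' := DFunLike.congr_fun hg j
    simp only [Tq_add, smul_add, Finsupp.add_apply, Finsupp.sub_apply, Finsupp.smul_apply,
      smul_eq_mul] at hf' hg' ⊢
    linarith
  | single k c =>
    rw [Tq_single, Tq_single, Tq_single, Tq_single, Tq_single, Tq_single, Tq_single]
    have e1 : m + (n + k) = m + n + k := by ring
    have e2 : n + (m + k) = m + n + k := by ring
    have e3 : m + n + k = m + n + k := rfl
    rw [e1, e2]
    rw [Finsupp.smul_single, Finsupp.smul_single, Finsupp.smul_single,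
      ← Finsupp.single_sub, ← Finsupp.single_sub, ← Finsupp.single_add]
    congr 1
    have := Tq_key q hq hq1 a b ha hb m n k c
    simpa [smul_eq_mul] using this
end

section
/- Let q ≠ 0, 1 be real, [n]_q = (1 − q^n)/(1 − q). Define operators on ℂ[z,z⁻¹]: T_m(z^k) = −[m+k]_q z^{m+k} and (on the super-extension with Grassmann variable θ) 𝕋_n acting as −θ·[n+k]_q z^{n+k}. Then for a = b = 1 and integers m, n, the commutator [T_m, T_n] = ((q^{−n} − q^{−m})/(q − 1))·[2]_q·T^{q²}_{m+n} − (1/(q−1))·((q^{−n} − 1) − (q^{−m} − 1))·T_{m+n}, where T^{q²}_r(z^k) = −[r+k]_{q²} z^{r+k}. -/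
lemma key_scalar (q : ℝ) (hq : 0 < q) (hq1 : q ≠ 1) (m n k : ℤ) (c : ℝ) :
    -(qaNum q 1 (m + n + k)) * (-(qaNum q 1 (n + k)) * c) -
      -(qaNum q 1 (m + n + k)) * (-(qaNum q 1 (m + k)) * c) =
    (((q ^ (-n) - q ^ (-m)) / (q - 1)) * qaNum q 1 2) * (-(qaNum q 2 (m + n + k)) * c) -
      ((1 / (q - 1)) * ((q ^ (-n) - 1) - (q ^ (-m) - 1))) * (-(qaNum q 1 (m + n + k)) * c) := by
  have hq0 : q ≠ 0 := ne_of_gt hq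
  have h1 : (1 : ℝ) - q ≠ 0 := fun h => hq1 (by linarith)
  have h1' : q - 1 ≠ 0 := fun h => hq1 (by linarith)
  have h2 : (1 : ℝ) - q * q ≠ 0 := by
    have : (1:ℝ) - q * q = (1 - q) * (1 + q) := by ring
    rw [this]
    exact mul_ne_zero h1 (by positivity)
  have hm : q ^ m ≠ 0 := zpow_ne_zero _ hq0
  have hn : q ^ n ≠ 0 := zpow_ne_zero _ hq0
  have hk : q ^ k ≠ 0 := zpow_ne_zero _ hq0
  simp only [qaNum, Nat.cast_one, Nat.cast_ofNat, one_mul, zpow_one, zpow_neg]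
  have e2 : q ^ ((2:ℤ) * (m + n + k)) = (q^m * q^n * q^k) * (q^m * q^n * q^k) := by
    rw [← zpow_add₀ hq0, ← zpow_add₀ hq0, ← zpow_add₀ hq0]
    congr 1; ring
  have eq2 : q ^ ((2:ℤ)) = q * q := by
    rw [show ((2:ℤ)) = ((2:ℕ):ℤ) from rfl, zpow_natCast]; ring
  rw [e2, eq2, zpow_add₀ hq0 (m+n) k, zpow_add₀ hq0 m n, zpow_add₀ hq0 n k,
    zpow_add₀ hq0 m k]
  generalize hA : q ^ m = A at hm ⊢
  generalize hB : q ^ n = B at hn ⊢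
  generalize hD : q ^ k = D at hk ⊢
  have h2' : (1:ℝ) - q ^ 2 ≠ 0 := by rw [sq]; exact h2
  field_simp
  ring

theorem Tq_commutator_a_eq_one (q : ℝ) (hq : 0 < q) (hq1 : q ≠ 1) (m n : ℤ) (f : ℤ →₀ ℝ) :
    Tq q 1 m (Tq q 1 n f) - Tq q 1 n (Tq q 1 m f) =
      (((q ^ (-n) - q ^ (-m)) / (q - 1)) * qaNum q 1 2) • Tq q 2 (m + n) f -
      ((1 / (q - 1)) * ((q ^ (-n) - 1) - (q ^ (-m) - 1))) • Tq q 1 (m + n) f := by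
  induction f using Finsupp.induction with
  | zero => simp [Tq_zero]
  | single_add k c f hk hc ih =>
    rw [Tq_add, Tq_add, Tq_add, Tq_add, Tq_add, Tq_add, smul_add, smul_add]
    have single_case :
        Tq q 1 m (Tq q 1 n (Finsupp.single k c)) - Tq q 1 n (Tq q 1 m (Finsupp.single k c)) =
          (((q ^ (-n) - q ^ (-m)) / (q - 1)) * qaNum q 1 2) • Tq q 2 (m + n) (Finsupp.single k c) -
          ((1 / (q - 1)) * ((q ^ (-n) - 1) - (q ^ (-m) - 1))) • Tq q 1 (m + n) (Finsupp.single k c) := by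
      rw [Tq_single, Tq_single, Tq_single, Tq_single, Tq_single, Tq_single,
        Finsupp.smul_single', Finsupp.smul_single']
      have e1 : m + (n + k) = m + n + k := by ring
      have e2 : n + (m + k) = m + n + k := by ring
      have e3 : m + n + k = m + n + k := rfl
      rw [e1, e2, ← Finsupp.single_sub, ← Finsupp.single_sub]
      congr 1
      exact key_scalar q hq hq1 m n k c
    calc Tq q 1 m (Tq q 1 n (Finsupp.single k c)) + Tq q 1 m (Tq q 1 n f) -
          (Tq q 1 n (Tq q 1 m (Finsupp.single k c)) + Tq q 1 n (Tq q 1 m f))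
        = (Tq q 1 m (Tq q 1 n (Finsupp.single k c)) - Tq q 1 n (Tq q 1 m (Finsupp.single k c))) +
          (Tq q 1 m (Tq q 1 n f) - Tq q 1 n (Tq q 1 m f)) := by abel
      _ = _ := by rw [single_case, ih]; abel
end

section
/- For a real q with 0 < q < 1 and integers m₁, m₂, m₃, the 3-bracket of q-deformed Witt generators l_m (acting on Laurent monomials by l_m(t^k) = −[k]_q t^{m+k}) defined as the weighted alternating sum [l_{m₁}, l_{m₂}, l_{m₃}] := Σ_{σ ∈ S₃} sgn(σ) q^{(2−1)m_{σ(1)} + (2−2)m_{σ(2)} + (2−3)m_{σ(3)}} l_{m_{σ(1)}} l_{m_{σ(2)}} l_{m_{σ(3)}} equals (q−1)·q^{−(m₁+m₂+m₃)}·([m₁]_q − [m₂]_q)([m₁]_q − [m₃]_q)([m₂]_q − [m₃]_q)·l_{m₁+m₂+m₃}, where [n]_q = (1−q^n)/(1−q). -/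
/-- The q-deformed number `[n]_q = (1 - q^n)/(1 - q)`, integer exponent. -/
noncomputable def qNum (q : ℝ) (n : ℤ) : ℝ := (1 - q ^ n) / (1 - q)

/-- The q-deformed Witt generator `l_m` acting on Laurent polynomials
(realized as `ℤ →₀ ℝ`), sending `t^k` to `-[k]_q t^{m+k}`. -/
noncomputable def lq (q : ℝ) (m : ℤ) (f : ℤ →₀ ℝ) : ℤ →₀ ℝ :=
  f.sum fun k c => Finsupp.single (m + k) (-(qNum q k) * c)

lemma lq_single (q : ℝ) (m k : ℤ) (c : ℝ) :
    lq q m (Finsupp.single k c) = Finsupp.single (m + k) (-(qNum q k) * c) := by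
  unfold lq
  rw [Finsupp.sum_single_index (by rw [mul_zero, Finsupp.single_zero])]

lemma lq_zero (q : ℝ) (m : ℤ) : lq q m 0 = 0 := by
  unfold lq; rw [Finsupp.sum_zero_index]

lemma lq_add (q : ℝ) (m : ℤ) (f g : ℤ →₀ ℝ) : lq q m (f + g) = lq q m f + lq q m g := by
  unfold lq
  rw [Finsupp.sum_add_index' (fun a => by rw [mul_zero, Finsupp.single_zero])
    (fun a b c => by rw [mul_add, Finsupp.single_add])]

lemma q_witt_single (q : ℝ) (hq0 : 0 < q) (hq1 : q < 1) (m : Fin 3 → ℤ) (k : ℤ) (c : ℝ) :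
    (∑ σ : Equiv.Perm (Fin 3),
        (((Equiv.Perm.sign σ : ℤ) : ℝ) * q ^ ((2 - 1) * m (σ 0) + (2 - 2) * m (σ 1) + (2 - 3) * m (σ 2))) •
          lq q (m (σ 0)) (lq q (m (σ 1)) (lq q (m (σ 2)) (Finsupp.single k c)))) =
      ((q - 1) * q ^ (-(m 0 + m 1 + m 2)) *
          ((qNum q (m 0) - qNum q (m 1)) * (qNum q (m 0) - qNum q (m 2)) *
            (qNum q (m 1) - qNum q (m 2)))) •
        lq q (m 0 + m 1 + m 2) (Finsupp.single k c) := by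
  have hq : q ≠ 0 := ne_of_gt hq0
  have h1q : 1 - q ≠ 0 := by linarith
  simp only [lq_single]
  rw [show (Finset.univ : Finset (Equiv.Perm (Fin 3))) =
    {1, Equiv.swap 0 1, Equiv.swap 0 2, Equiv.swap 1 2,
     Equiv.swap 0 1 * Equiv.swap 0 2, Equiv.swap 0 2 * Equiv.swap 0 1} from by decide]
  rw [Finset.sum_insert (by decide), Finset.sum_insert (by decide), Finset.sum_insert (by decide),
    Finset.sum_insert (by decide), Finset.sum_insert (by decide), Finset.sum_singleton]
  simp only [Equiv.Perm.sign_one, Equiv.Perm.sign_mul, Equiv.Perm.one_apply,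
    Equiv.Perm.sign_swap (show (0:Fin 3) ≠ 1 by decide),
    Equiv.Perm.sign_swap (show (0:Fin 3) ≠ 2 by decide),
    Equiv.Perm.sign_swap (show (1:Fin 3) ≠ 2 by decide),
    show Equiv.swap (0:Fin 3) 1 0 = 1 from by decide,
    show Equiv.swap (0:Fin 3) 1 1 = 0 from by decide,
    show Equiv.swap (0:Fin 3) 1 2 = 2 from by decide,
    show Equiv.swap (0:Fin 3) 2 0 = 2 from by decide,
    show Equiv.swap (0:Fin 3) 2 1 = 1 from by decide,
    show Equiv.swap (0:Fin 3) 2 2 = 0 from by decide,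
    show Equiv.swap (1:Fin 3) 2 0 = 0 from by decide,
    show Equiv.swap (1:Fin 3) 2 1 = 2 from by decide,
    show Equiv.swap (1:Fin 3) 2 2 = 1 from by decide,
    show (Equiv.swap (0:Fin 3) 1 * Equiv.swap 0 2 : Equiv.Perm (Fin 3)) 0 = 2 from by decide,
    show (Equiv.swap (0:Fin 3) 1 * Equiv.swap 0 2 : Equiv.Perm (Fin 3)) 1 = 0 from by decide,
    show (Equiv.swap (0:Fin 3) 1 * Equiv.swap 0 2 : Equiv.Perm (Fin 3)) 2 = 1 from by decide,
    show (Equiv.swap (0:Fin 3) 2 * Equiv.swap 0 1 : Equiv.Perm (Fin 3)) 0 = 1 from by decide,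
    show (Equiv.swap (0:Fin 3) 2 * Equiv.swap 0 1 : Equiv.Perm (Fin 3)) 1 = 2 from by decide,
    show (Equiv.swap (0:Fin 3) 2 * Equiv.swap 0 1 : Equiv.Perm (Fin 3)) 2 = 0 from by decide,
    Units.val_neg, Units.val_one, Int.cast_neg, Int.cast_one, neg_mul, one_mul, neg_smul, mul_neg]
  have hexp : ∀ a b c : ℤ, (2-1)*a + (2-2)*b + (2-3)*c = a - c := by intros; ring
  simp only [hexp]
  rw [show m 0 + (m 1 + (m 2 + k)) = m 0 + m 1 + m 2 + k from by ring,
    show m 1 + (m 0 + (m 2 + k)) = m 0 + m 1 + m 2 + k from by ring,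
    show m 2 + (m 1 + (m 0 + k)) = m 0 + m 1 + m 2 + k from by ring,
    show m 0 + (m 2 + (m 1 + k)) = m 0 + m 1 + m 2 + k from by ring,
    show m 2 + (m 0 + (m 1 + k)) = m 0 + m 1 + m 2 + k from by ring,
    show m 1 + (m 2 + (m 0 + k)) = m 0 + m 1 + m 2 + k from by ring]
  simp only [neg_neg, Finsupp.smul_single, smul_eq_mul, ← Finsupp.single_neg, ← Finsupp.single_add]
  congr 1
  simp only [qNum, zpow_sub₀ hq, zpow_add₀ hq, zpow_neg]
  field_simp
  ring

theorem q_witt_three_bracket (q : ℝ) (hq0 : 0 < q) (hq1 : q < 1) (m : Fin 3 → ℤ)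
    (f : ℤ →₀ ℝ) :
    (∑ σ : Equiv.Perm (Fin 3),
        (((Equiv.Perm.sign σ : ℤ) : ℝ) * q ^ ((2 - 1) * m (σ 0) + (2 - 2) * m (σ 1) + (2 - 3) * m (σ 2))) •
          lq q (m (σ 0)) (lq q (m (σ 1)) (lq q (m (σ 2)) f))) =
      ((q - 1) * q ^ (-(m 0 + m 1 + m 2)) *
          ((qNum q (m 0) - qNum q (m 1)) * (qNum q (m 0) - qNum q (m 2)) *
            (qNum q (m 1) - qNum q (m 2)))) •
        lq q (m 0 + m 1 + m 2) f := by
  induction f using Finsupp.induction_linear with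
  | zero => simp only [lq_zero, smul_zero, Finset.sum_const_zero]
  | add f g hf hg =>
      simp only [lq_add, smul_add, Finset.sum_add_distrib, hf, hg]
  | single k c => exact q_witt_single q hq0 hq1 m k c
end
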